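/- Let H and K be real Hilbert spaces and T : H →L[ℝ] K a bounded linear operator with ‖T‖ ≤ 1. Let β > 0, w₀ ∈ H, and h₀ = (T*T)^{β/2} w₀, where the fractional power of T*T is defined via the continuous functional calculus. For λ > 0 define h_{*,0} = 0 and h_{*,t} = (T*T + λ·id)⁻¹ (T*T h₀ + λ h_{*,t−1}) for integers t ≥ 1. Then for every t ≥ 1, ‖T(h_{*,t} − h₀)‖² ≤ ‖w₀‖² · λ^{min(β + 1, 2t)}. -/

import Mathlib

open ContinuousLinearMap InnerProductSpace

private lemma key_ineq {lam β x : ℝ} (hlam : 0 < lam) (hβ : 0 < β)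
    (hx0 : 0 ≤ x) (hx1 : x ≤ 1) (t : ℕ) :
    ((lam / (x + lam)) ^ t * x ^ (β / 2)) * (x * ((lam / (x + lam)) ^ t * x ^ (β / 2)))
      ≤ lam ^ min (β + 1) (2 * (t : ℝ)) := by
  have hmpos : (0:ℝ) < lam ^ min (β + 1) (2 * (t : ℝ)) := Real.rpow_pos_of_pos hlam _
  rcases eq_or_lt_of_le hx0 with h0 | hx
  · rw [← h0]
    simp [hmpos.le]
  · have hs : 0 < x + lam := by positivity
    have hxle : x ≤ x + lam := by linarith
    have hlle : lam ≤ x + lam := by linarith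
    -- rewrite LHS as rpow expression
    have hb2 : x ^ (β / 2) * x ^ (β / 2) = x ^ β := by
      rw [← Real.rpow_add hx]; norm_num
    have hLHS : ((lam / (x + lam)) ^ t * x ^ (β / 2)) * (x * ((lam / (x + lam)) ^ t * x ^ (β / 2)))
        = x ^ (β + 1) * ((lam / (x + lam)) ^ (2 * (t:ℝ))) := by
      have h1 : ((lam / (x + lam)) ^ t : ℝ) * (lam / (x + lam)) ^ t
          = (lam / (x + lam)) ^ (2 * (t:ℝ)) := by
        rw [← pow_add, ← Real.rpow_natCast (lam / (x + lam)) (t + t)]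
        push_cast
        ring_nf
      have h2 : x ^ (β + 1) = x ^ β * x := by
        rw [Real.rpow_add hx, Real.rpow_one]
      rw [h2, ← hb2, ← h1]; ring
    rw [hLHS]
    have hdiv : ((lam / (x + lam)) ^ (2 * (t:ℝ))) = lam ^ (2 * (t:ℝ)) / (x + lam) ^ (2 * (t:ℝ)) :=
      Real.div_rpow hlam.le hs.le _
    rw [hdiv, ← mul_div_assoc, div_le_iff₀ (Real.rpow_pos_of_pos hs _)]
    rcases le_total (β + 1) (2 * (t:ℝ)) with hcase | hcase
    · rw [min_eq_left hcase]
      have e1 : lam ^ (2 * (t:ℝ)) = lam ^ (β + 1) * lam ^ (2 * (t:ℝ) - (β + 1)) := by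
        rw [← Real.rpow_add hlam]; ring_nf
      have e2 : (x + lam) ^ (β + 1) * (x + lam) ^ (2 * (t:ℝ) - (β + 1))
          = (x + lam) ^ (2 * (t:ℝ)) := by
        rw [← Real.rpow_add hs]; ring_nf
      calc x ^ (β + 1) * lam ^ (2 * (t:ℝ))
          = lam ^ (β + 1) * (x ^ (β + 1) * lam ^ (2 * (t:ℝ) - (β + 1))) := by rw [e1]; ring
        _ ≤ lam ^ (β + 1) * ((x + lam) ^ (β + 1) * (x + lam) ^ (2 * (t:ℝ) - (β + 1))) := by
            refine mul_le_mul_of_nonneg_left (mul_le_mul ?_ ?_ (by positivity) (by positivity))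
              (by positivity)
            · exact Real.rpow_le_rpow hx0 hxle (by positivity)
            · exact Real.rpow_le_rpow hlam.le hlle (by linarith)
        _ = lam ^ (β + 1) * (x + lam) ^ (2 * (t:ℝ)) := by rw [e2]
    · rw [min_eq_right hcase]
      have e1 : x ^ (β + 1) = x ^ (2 * (t:ℝ)) * x ^ (β + 1 - 2 * (t:ℝ)) := by
        rw [← Real.rpow_add hx]; ring_nf
      calc x ^ (β + 1) * lam ^ (2 * (t:ℝ))
          = lam ^ (2 * (t:ℝ)) * (x ^ (2 * (t:ℝ)) * x ^ (β + 1 - 2 * (t:ℝ))) := by rw [e1]; ring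
        _ ≤ lam ^ (2 * (t:ℝ)) * ((x + lam) ^ (2 * (t:ℝ)) * 1) := by
            refine mul_le_mul_of_nonneg_left (mul_le_mul ?_ ?_ (by positivity) (by positivity))
              (by positivity)
            · exact Real.rpow_le_rpow hx0 hxle (by positivity)
            · exact Real.rpow_le_one hx0 hx1 (by linarith)
        _ = lam ^ (2 * (t:ℝ)) * (x + lam) ^ (2 * (t:ℝ)) := by ring

/-- Weak-metric iterated Tikhonov regularization bias bound under the β-source condition:
with `‖T‖ ≤ 1`, `h₀ = (T*T)^(β/2) w₀` (fractional power via the continuous functional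
calculus), `h_{*,0} = 0` and `(T*T + λ·id) h_{*,t} = T*T h₀ + λ h_{*,t−1}` for `t ≥ 1`,
one has `‖T(h_{*,t} − h₀)‖² ≤ ‖w₀‖² λ^(min (β+1) (2t))` for every `t ≥ 1`. -/
theorem iterated_tikhonov_bias_weak_metric
    {H K : Type*} [NormedAddCommGroup H] [InnerProductSpace ℝ H] [CompleteSpace H]
    [NormedAddCommGroup K] [InnerProductSpace ℝ K] [CompleteSpace K]
    [ContinuousFunctionalCalculus ℝ (H →L[ℝ] H) IsSelfAdjoint]
    (T : H →L[ℝ] K) (hT : ‖T‖ ≤ 1)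
    (β : ℝ) (hβ : 0 < β) (w₀ h₀ : H)
    (hsource : h₀ = cfc (fun x : ℝ => x ^ (β / 2)) (adjoint T ∘L T) w₀)
    (lam : ℝ) (hlam : 0 < lam)
    (hs : ℕ → H) (h0 : hs 0 = 0)
    (hrec : ∀ t : ℕ, (adjoint T ∘L T + lam • ContinuousLinearMap.id ℝ H) (hs (t + 1))
      = (adjoint T ∘L T) h₀ + lam • hs t) :
    ∀ t : ℕ, 1 ≤ t → ‖T (hs t - h₀)‖ ^ 2 ≤ ‖w₀‖ ^ 2 * lam ^ min (β + 1) (2 * (t : ℝ)) := by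
  rcases subsingleton_or_nontrivial H with hsub | hnt
  · intro t ht
    have h1 : hs t - h₀ = 0 := Subsingleton.elim _ _
    rw [h1, map_zero, norm_zero]
    have h2 : (0:ℝ) < lam ^ min (β + 1) (2 * (t : ℝ)) := Real.rpow_pos_of_pos hlam _
    norm_num
    positivity
  set A : H →L[ℝ] H := adjoint T ∘L T with hAdef
  have hApos : A.IsPositive := by
    simpa [hAdef, ContinuousLinearMap.one_def] using (ContinuousLinearMap.isPositive_one (E := K)).adjoint_conj T
  have hA : IsSelfAdjoint A := hApos.isSelfAdjoint
  -- spectrum is contained in [0,1]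
  have hσ0 : ∀ x ∈ spectrum ℝ A, (0:ℝ) ≤ x :=
    SpectrumRestricts.nnreal_iff.mp hApos.spectrumRestricts
  have hσ1 : ∀ x ∈ spectrum ℝ A, x ≤ 1 := by
    intro x hx
    have h1 : ‖x‖ ≤ ‖A‖ := spectrum.norm_le_norm_of_mem hx
    have h2 : ‖A‖ ≤ 1 := by
      rw [hAdef, norm_adjoint_comp_self]
      nlinarith [norm_nonneg T]
    calc x ≤ ‖x‖ := le_abs_self x
      _ ≤ 1 := h1.trans h2
  -- continuity facts
  have hrp : Continuous fun x : ℝ => x ^ (β / 2) :=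
    continuous_iff_continuousAt.mpr fun x =>
      Real.continuousAt_rpow_const x (β / 2) (Or.inr (by positivity))
  have hden : ContinuousOn (fun x : ℝ => lam / (x + lam)) (spectrum ℝ A) := by
    refine ContinuousOn.div continuousOn_const
      ((continuous_id.add continuous_const).continuousOn) fun x hx => ?_
    have := hσ0 x hx; positivity
  set f : ℕ → ℝ → ℝ := fun t x => (lam / (x + lam)) ^ t * x ^ (β / 2) with hfdef
  have hfc : ∀ t : ℕ, ContinuousOn (f t) (spectrum ℝ A) := fun t =>
    (hden.pow t).mul hrp.continuousOn
  set B : H →L[ℝ] H := A + lam • ContinuousLinearMap.id ℝ H with hBdef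
  have hBinj : ∀ v w : H, B v = B w → v = w := by
    intro v w hvw
    rw [← sub_eq_zero]
    set u := v - w with hu
    have hBu : B u = 0 := by rw [hu, map_sub, hvw, sub_self]
    have hBu' : A u + lam • u = 0 := by
      rw [← hBu]; simp [hBdef]
    have h1 : ⟪A u, u⟫_ℝ + lam * ⟪u, u⟫_ℝ = 0 := by
      rw [← real_inner_smul_left, ← inner_add_left, hBu', inner_zero_left]
    have h2 : 0 ≤ ⟪A u, u⟫_ℝ := by
      rw [hAdef, comp_apply, adjoint_inner_left]; exact real_inner_self_nonneg
    have h3 : ⟪u, u⟫_ℝ = 0 :=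
      le_antisymm (by nlinarith) real_inner_self_nonneg
    exact inner_self_eq_zero.mp (by exact_mod_cast h3)
  have hBcfc : cfc (fun x : ℝ => x + lam) A = B := by
    rw [cfc_add_const lam (fun x => x) A (continuousOn_id) hA, cfc_id' ℝ A hA,
      Algebra.algebraMap_eq_smul_one, hBdef]
    congr 1
  -- main induction
  have key : ∀ t : ℕ, h₀ - hs t = cfc (f t) A w₀ := by
    intro t
    induction t with
    | zero =>
      rw [h0, sub_zero, hsource]
      have hcg : cfc (fun x : ℝ => x ^ (β / 2)) A = cfc (f 0) A :=
        cfc_congr fun x hx => by simp [hfdef]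
      exact DFunLike.congr_fun hcg w₀
    | succ t ih =>
      refine hBinj _ _ ?_
      have hB1 : B (h₀ - hs (t + 1)) = lam • cfc (f t) A w₀ := by
        rw [map_sub, hrec t, ← ih]
        have : B h₀ = A h₀ + lam • h₀ := by simp [hBdef]
        rw [this, smul_sub]
        abel
      have hB2 : B (cfc (f (t + 1)) A w₀) = lam • cfc (f t) A w₀ := by
        rw [← hBcfc, ← ContinuousLinearMap.mul_apply,
          ← cfc_mul (fun x : ℝ => x + lam) (f (t + 1)) A
            ((continuous_id.add continuous_const).continuousOn) (hfc (t + 1))]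
        have hcongr : cfc (fun x : ℝ => (x + lam) * f (t + 1) x) A
            = cfc (fun x : ℝ => lam * f t x) A := by
          refine cfc_congr fun x hx => ?_
          have hx0 := hσ0 x hx
          have hxl : x + lam ≠ 0 := by positivity
          simp only [hfdef, pow_succ]
          field_simp
        rw [hcongr, cfc_const_mul lam (f t) A (hfc t), ContinuousLinearMap.smul_apply]
      rw [hB1, hB2]
  -- final estimate
  intro t ht
  set c : ℝ := lam ^ min (β + 1) (2 * (t : ℝ)) with hcdef
  set F : ℝ → ℝ := f t with hFdef
  have hFc : ContinuousOn F (spectrum ℝ A) := hfc t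
  set G : ℝ → ℝ := fun x => F x * (x * F x) with hGdef
  have hGc : ContinuousOn G (spectrum ℝ A) := hFc.mul (continuousOn_id.mul hFc)
  have hGle : ∀ x ∈ spectrum ℝ A, G x ≤ c := fun x hx =>
    key_ineq hlam hβ (hσ0 x hx) (hσ1 x hx) t
  -- the squared norm equals the quadratic form of cfc G
  have hv : hs t - h₀ = -(h₀ - hs t) := by abel
  have hnorm : ‖T (hs t - h₀)‖ ^ 2 = ⟪cfc G A w₀, w₀⟫_ℝ := by
    rw [hv, map_neg, norm_neg, ← real_inner_self_eq_norm_sq, key t]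
    have hAF : A (cfc F A w₀) = cfc (fun x => x * F x) A w₀ := by
      rw [cfc_mul (fun x : ℝ => x) F A continuousOn_id hFc, cfc_id' ℝ A hA,
        ContinuousLinearMap.mul_apply]
    have hsa : adjoint (cfc F A) = cfc F A := cfc_predicate F A
    calc ⟪T (cfc F A w₀), T (cfc F A w₀)⟫_ℝ
        = ⟪A (cfc F A w₀), cfc F A w₀⟫_ℝ := by
          rw [hAdef, comp_apply, adjoint_inner_left]
      _ = ⟪cfc (fun x => x * F x) A w₀, cfc F A w₀⟫_ℝ := by rw [hAF]
      _ = ⟪cfc F A (cfc (fun x => x * F x) A w₀), w₀⟫_ℝ := by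
          rw [← adjoint_inner_left (cfc F A), hsa]
      _ = ⟪cfc G A w₀, w₀⟫_ℝ := by
          rw [← ContinuousLinearMap.mul_apply, ← cfc_mul F (fun x => x * F x) A hFc
            (continuousOn_id.mul hFc)]
  -- positivity of c - G as an operator
  set q : ℝ → ℝ := fun x => Real.sqrt (c - G x) with hqdef
  have hqc : ContinuousOn q (spectrum ℝ A) :=
    Real.continuous_sqrt.comp_continuousOn (continuousOn_const.sub hGc)
  have hsplit : cfc (fun x => c - G x) A = cfc q A * cfc q A := by
    rw [← cfc_mul q q A hqc hqc]
    exact cfc_congr fun x hx =>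
      (Real.mul_self_sqrt (sub_nonneg.mpr (hGle x hx))).symm
  have hqsa : adjoint (cfc q A) = cfc q A := cfc_predicate q A
  have hpos : 0 ≤ ⟪cfc (fun x => c - G x) A w₀, w₀⟫_ℝ := by
    rw [hsplit, ContinuousLinearMap.mul_apply]
    nth_rewrite 1 [← hqsa]
    rw [adjoint_inner_left]
    exact real_inner_self_nonneg
  have hsub : cfc (fun x => c - G x) A = algebraMap ℝ (H →L[ℝ] H) c - cfc G A := by
    rw [cfc_sub (fun _ => c) G A continuousOn_const hGc, cfc_const c A hA]
  have hfinal : ⟪cfc G A w₀, w₀⟫_ℝ ≤ c * ‖w₀‖ ^ 2 := by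
    rw [hsub] at hpos
    have : (algebraMap ℝ (H →L[ℝ] H) c) w₀ = c • w₀ := by
      rw [Algebra.algebraMap_eq_smul_one, ContinuousLinearMap.smul_apply,
        ContinuousLinearMap.one_apply]
    rw [ContinuousLinearMap.sub_apply, this, inner_sub_left, real_inner_smul_left,
      real_inner_self_eq_norm_sq] at hpos
    linarith
  rw [hnorm]
  calc ⟪cfc G A w₀, w₀⟫_ℝ ≤ c * ‖w₀‖ ^ 2 := hfinal
    _ = ‖w₀‖ ^ 2 * lam ^ min (β + 1) (2 * (t : ℝ)) := by rw [hcdef]; ring
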